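/- Under detailed balance, E(e^g, g) ≥ 4 E(e^{g/2}, e^{g/2}) for every function g : S → ℝ, where E is the Dirichlet form; consequently E(ℓ, log ℓ) ≥ 4 E(√ℓ, √ℓ) for every ℓ : S → (0,∞). -/

import Mathlib

/-- Key scalar inequality: `(t+1) log t ≥ 2(t-1)` for `t ≥ 1`. -/
lemma log_key {t : ℝ} (ht : 1 ≤ t) : 2 * (t - 1) ≤ (t + 1) * Real.log t := by
  set F : ℝ → ℝ := fun s => (s + 1) * Real.log s - 2 * (s - 1) with hF
  have hderiv : ∀ x : ℝ, 0 < x →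
      HasDerivAt F (1 * Real.log x + (x + 1) * x⁻¹ - 2) x := by
    intro x hx
    have h1 : HasDerivAt (fun s : ℝ => s + 1) 1 x := (hasDerivAt_id x).add_const 1
    have h2 : HasDerivAt Real.log x⁻¹ x := Real.hasDerivAt_log hx.ne'
    have h3 : HasDerivAt (fun s : ℝ => 2 * (s - 1)) 2 x := by
      simpa using (((hasDerivAt_id x).sub_const 1).const_mul 2)
    exact (h1.mul h2).sub h3
  have hmono : MonotoneOn F (Set.Ici (1:ℝ)) := by
    apply monotoneOn_of_deriv_nonneg (convex_Ici 1)
    · apply ContinuousOn.sub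
      · apply ContinuousOn.mul (by fun_prop)
        exact Real.continuousOn_log.mono (by intro x hx; simp at hx ⊢; linarith)
      · fun_prop
    · intro x hx
      rw [interior_Ici] at hx
      exact ((hderiv x (lt_trans one_pos hx)).differentiableAt).differentiableWithinAt
    · intro x hx
      rw [interior_Ici] at hx
      have hx0 : (0:ℝ) < x := lt_trans one_pos hx
      rw [(hderiv x hx0).deriv]
      have hlog : 1 - x⁻¹ ≤ Real.log x := by
        have := Real.log_le_sub_one_of_pos (inv_pos.2 hx0)
        rw [Real.log_inv] at this
        linarith
      have hxi : (x + 1) * x⁻¹ = 1 + x⁻¹ := by field_simp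
      rw [hxi]
      linarith
  have h0 : F 1 = 0 := by simp [hF]
  have := hmono (Set.self_mem_Ici) (Set.mem_Ici.2 ht) ht
  rw [h0] at this
  simp only [hF] at this
  linarith

lemma log_key' {a b : ℝ} (hb : 0 < b) (hab : b ≤ a) :
    2 * (a - b) ≤ (a + b) * (Real.log a - Real.log b) := by
  have ha : 0 < a := lt_of_lt_of_le hb hab
  have ht : 1 ≤ a / b := (one_le_div hb).2 hab
  have hk := log_key ht
  rw [Real.log_div ha.ne' hb.ne'] at hk
  have := mul_le_mul_of_nonneg_left hk hb.le
  have hcancel : b * (a / b) = a := by field_simp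
  nlinarith [this, hcancel]

/-- Pointwise inequality `4 (e^{u/2} - e^{v/2})² ≤ (e^u - e^v)(u - v)`. -/
lemma pt_ineq (u v : ℝ) :
    4 * ((Real.exp (u/2) - Real.exp (v/2)) * (Real.exp (u/2) - Real.exp (v/2)))
      ≤ (Real.exp u - Real.exp v) * (u - v) := by
  wlog h : v ≤ u with H
  · have h' := H v u (le_of_not_ge h)
    nlinarith [h']
  set a := Real.exp (u/2) with hadef
  set b := Real.exp (v/2) with hbdef
  have hb : 0 < b := Real.exp_pos _
  have hab : b ≤ a := Real.exp_le_exp.2 (by linarith)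
  have hu : Real.exp u = a * a := by rw [hadef, ← Real.exp_add]; ring_nf
  have hv : Real.exp v = b * b := by rw [hbdef, ← Real.exp_add]; ring_nf
  have hla : Real.log a = u / 2 := by rw [hadef, Real.log_exp]
  have hlb : Real.log b = v / 2 := by rw [hbdef, Real.log_exp]
  have key := log_key' hb hab
  rw [hla, hlb] at key
  rw [hu, hv]
  nlinarith [mul_le_mul_of_nonneg_left key (sub_nonneg.2 hab)]

lemma dirichlet_sym {S : Type*} [Fintype S] (κ : S → S → ℝ) (q : S → ℝ)
    (hκ_row : ∀ x, ∑ y, κ x y = 0)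
    (hq_inv : ∀ x, ∑ y, q y * κ y x = 0)
    (hdb : ∀ x y, q y * κ y x = q x * κ x y)
    (f h : S → ℝ) :
    -(∑ x, ∑ y, q y * κ y x * f y * h x)
      = (1/2) * ∑ x, ∑ y, q y * κ y x * (f y - f x) * (h y - h x) := by
  have e1 : ∑ x, ∑ y, q y * κ y x * (f y * h y) = 0 := by
    rw [Finset.sum_comm]
    refine Finset.sum_eq_zero fun y _ => ?_
    have : ∑ x, q y * κ y x * (f y * h y) = (q y * f y * h y) * ∑ x, κ y x := by
      rw [Finset.mul_sum]; exact Finset.sum_congr rfl fun x _ => by ring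
    rw [this, hκ_row, mul_zero]
  have e2 : ∑ x, ∑ y, q y * κ y x * (f x * h x) = 0 := by
    refine Finset.sum_eq_zero fun x _ => ?_
    have : ∑ y, q y * κ y x * (f x * h x) = (f x * h x) * ∑ y, q y * κ y x := by
      rw [Finset.mul_sum]; exact Finset.sum_congr rfl fun y _ => by ring
    rw [this, hq_inv, mul_zero]
  have e3 : ∑ x, ∑ y, q y * κ y x * (f x * h y) = ∑ x, ∑ y, q y * κ y x * (f y * h x) := by
    calc ∑ x, ∑ y, q y * κ y x * (f x * h y)
        = ∑ x, ∑ y, q x * κ x y * (f x * h y) := by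
          exact Finset.sum_congr rfl fun x _ => Finset.sum_congr rfl fun y _ => by rw [hdb]
      _ = ∑ y, ∑ x, q x * κ x y * (f x * h y) := Finset.sum_comm
      _ = ∑ x, ∑ y, q y * κ y x * (f y * h x) := rfl
  have expand : ∀ x y : S, q y * κ y x * (f y - f x) * (h y - h x) =
      q y * κ y x * (f y * h y) - q y * κ y x * (f y * h x)
        - q y * κ y x * (f x * h y) + q y * κ y x * (f x * h x) := fun x y => by ring
  have lhs_eq : ∑ x, ∑ y, q y * κ y x * f y * h x = ∑ x, ∑ y, q y * κ y x * (f y * h x) := by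
    exact Finset.sum_congr rfl fun x _ => Finset.sum_congr rfl fun y _ => by ring
  simp only [expand, Finset.sum_add_distrib, Finset.sum_sub_distrib]
  rw [lhs_eq, e1, e2, e3]
  ring

theorem diaconis_saloff_coste_estimate
    {S : Type*} [Fintype S] (κ : S → S → ℝ) (q : S → ℝ)
    (hκ_off : ∀ x y, x ≠ y → 0 ≤ κ x y)
    (hκ_row : ∀ x, ∑ y, κ x y = 0)
    (hq_pos : ∀ x, 0 < q x)
    (hq_sum : ∑ x, q x = 1)
    (hq_inv : ∀ x, ∑ y, q y * κ y x = 0)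
    (hdb : ∀ x y, q y * κ y x = q x * κ x y) :
    (∀ g : S → ℝ,
      4 * (-(∑ x, ∑ y, q y * κ y x * Real.exp (g y / 2) * Real.exp (g x / 2)))
        ≤ -(∑ x, ∑ y, q y * κ y x * Real.exp (g y) * g x))
    ∧ (∀ ℓ : S → ℝ, (∀ x, 0 < ℓ x) →
      4 * (-(∑ x, ∑ y, q y * κ y x * Real.sqrt (ℓ y) * Real.sqrt (ℓ x)))
        ≤ -(∑ x, ∑ y, q y * κ y x * ℓ y * Real.log (ℓ x))) := by
  have part1 : ∀ g : S → ℝ,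
      4 * (-(∑ x, ∑ y, q y * κ y x * Real.exp (g y / 2) * Real.exp (g x / 2)))
        ≤ -(∑ x, ∑ y, q y * κ y x * Real.exp (g y) * g x) := by
    intro g
    have id1 := dirichlet_sym κ q hκ_row hq_inv hdb
      (fun x => Real.exp (g x / 2)) (fun x => Real.exp (g x / 2))
    have id2 := dirichlet_sym κ q hκ_row hq_inv hdb (fun x => Real.exp (g x)) g
    rw [id1, id2]
    have ptterm : ∀ x y : S,
        4 * (q y * κ y x * (Real.exp (g y / 2) - Real.exp (g x / 2)) *
            (Real.exp (g y / 2) - Real.exp (g x / 2)))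
          ≤ q y * κ y x * (Real.exp (g y) - Real.exp (g x)) * (g y - g x) := by
      intro x y
      by_cases hxy : y = x
      · subst hxy; simp
      · have hc : 0 ≤ q y * κ y x := mul_nonneg (hq_pos y).le (hκ_off y x hxy)
        have := mul_le_mul_of_nonneg_left (pt_ineq (g y) (g x)) hc
        nlinarith [this]
    have main : ∑ x, ∑ y, 4 * (q y * κ y x * (Real.exp (g y / 2) - Real.exp (g x / 2)) *
            (Real.exp (g y / 2) - Real.exp (g x / 2)))
          ≤ ∑ x, ∑ y, q y * κ y x * (Real.exp (g y) - Real.exp (g x)) * (g y - g x) :=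
      Finset.sum_le_sum fun x _ => Finset.sum_le_sum fun y _ => ptterm x y
    have factor : ∑ x, ∑ y, 4 * (q y * κ y x * (Real.exp (g y / 2) - Real.exp (g x / 2)) *
            (Real.exp (g y / 2) - Real.exp (g x / 2)))
        = 4 * ∑ x, ∑ y, q y * κ y x * (Real.exp (g y / 2) - Real.exp (g x / 2)) *
            (Real.exp (g y / 2) - Real.exp (g x / 2)) := by
      simp [Finset.mul_sum]
    rw [factor] at main
    linarith
  refine ⟨part1, ?_⟩
  intro ℓ hℓ
  have h1 := part1 (fun x => Real.log (ℓ x))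
  have e1 : ∀ x, Real.exp (Real.log (ℓ x)) = ℓ x := fun x => Real.exp_log (hℓ x)
  have e2 : ∀ x, Real.exp (Real.log (ℓ x) / 2) = Real.sqrt (ℓ x) := by
    intro x
    rw [Real.sqrt_eq_rpow, Real.rpow_def_of_pos (hℓ x)]
    congr 1; ring
  simp only [e1, e2] at h1
  exact h1
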